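/- arXiv:1303.2198 — 2 statements merged into one kernel-verified Lean document; each statement's English description precedes it below -/
import Mathlib

section
/- For every simplicial set X, the group K_0(i_! X) is the free abelian group generated by the set π_0(X) of connected components of X (which equals π_0(i^* i_! X)). -/
open CategoryTheory CategoryTheory.Limits Opposite Simplicial

structure TreeCat where
  Ω : Type
  [instCat : SmallCategory Ω]
  /-- the tree with a single edge and no vertices -/
  eta : Ω
  /-- the `n`-corolla -/
  corolla : ℕ → Ω
  /-- the inclusions of the `n` leaves of the `n`-corolla -/
  leaf : ∀ n : ℕ, Fin n → (eta ⟶ corolla n)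
  /-- the inclusion of the root edge of the `n`-corolla -/
  root : ∀ n : ℕ, eta ⟶ corolla n

attribute [instance] TreeCat.instCat

abbrev dSet (T : TreeCat) : Type 1 := T.Ωᵒᵖ ⥤ Type

variable (T : TreeCat)

abbrev dEdges (D : dSet T) : Type := D.obj (op T.eta)

def corollaRel (D : dSet T) : AddSubgroup (FreeAbelianGroup (dEdges T D)) :=
  AddSubgroup.closure
    {g | ∃ (n : ℕ) (x : D.obj (op (T.corolla n))),
      g = (∑ i : Fin n, FreeAbelianGroup.of (D.map (T.leaf n i).op x)) -
          FreeAbelianGroup.of (D.map (T.root n).op x)}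

abbrev K0 (D : dSet T) : Type := FreeAbelianGroup (dEdges T D) ⧸ corollaRel T D

def K0of (D : dSet T) (x : dEdges T D) : K0 T D :=
  QuotientAddGroup.mk (FreeAbelianGroup.of x)

def SSetPi0 (X : SSet) : Type :=
  Quot (fun a b : X _⦋0⦌ => ∃ e : X _⦋1⦌,
    X.map (SimplexCategory.δ 1).op e = a ∧ X.map (SimplexCategory.δ 0).op e = b)

structure IsShriek (X : SSet) (D : dSet T) where
  e0 : dEdges T D ≃ X _⦋0⦌
  e1 : D.obj (op (T.corolla 1)) ≃ X _⦋1⦌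
  leaf_comm : ∀ d, e0 (D.map (T.leaf 1 0).op d) =
    X.map (SimplexCategory.δ 1).op (e1 d)
  root_comm : ∀ d, e0 (D.map (T.root 1).op d) =
    X.map (SimplexCategory.δ 0).op (e1 d)
  empty : ∀ n : ℕ, n ≠ 1 → IsEmpty (D.obj (op (T.corolla n)))

/-- `K₀(i_! X)` is the free abelian group on `π₀(X)`, via the
canonical generator map. -/
theorem K0_shriek_free_on_pi0 (X : SSet) (D : dSet T) (h : IsShriek T X D) :
    ∃ φ : FreeAbelianGroup (SSetPi0 X) ≃+ K0 T D,
      ∀ x : X _⦋0⦌,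
        φ (FreeAbelianGroup.of (Quot.mk _ x)) = K0of T D (h.e0.symm x) := by
  -- the forward hom
  have wd : ∀ a b : X _⦋0⦌, (∃ e : X _⦋1⦌,
      X.map (SimplexCategory.δ 1).op e = a ∧ X.map (SimplexCategory.δ 0).op e = b) →
      K0of T D (h.e0.symm a) = K0of T D (h.e0.symm b) := by
    rintro a b ⟨e, ha, hb⟩
    set d := h.e1.symm e with hd
    have hl : h.e0.symm a = D.map (T.leaf 1 0).op d := by
      apply h.e0.injective
      rw [Equiv.apply_symm_apply, h.leaf_comm, Equiv.apply_symm_apply, ha]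
    have hr : h.e0.symm b = D.map (T.root 1).op d := by
      apply h.e0.injective
      rw [Equiv.apply_symm_apply, h.root_comm, Equiv.apply_symm_apply, hb]
    rw [hl, hr]
    unfold K0of
    rw [QuotientAddGroup.eq]
    have hm : (∑ i : Fin 1, FreeAbelianGroup.of (D.map (T.leaf 1 i).op d)) -
        FreeAbelianGroup.of (D.map (T.root 1).op d) ∈ corollaRel T D :=
      AddSubgroup.subset_closure ⟨1, d, rfl⟩
    rw [Fin.sum_univ_one] at hm
    have hm2 := (corollaRel T D).neg_mem hm
    rwa [neg_sub, sub_eq_neg_add] at hm2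
  let ψ : FreeAbelianGroup (SSetPi0 X) →+ K0 T D :=
    FreeAbelianGroup.lift (Quot.lift (fun x => K0of T D (h.e0.symm x)) wd)
  let f : FreeAbelianGroup (dEdges T D) →+ FreeAbelianGroup (SSetPi0 X) :=
    FreeAbelianGroup.map (fun d => Quot.mk _ (h.e0 d))
  have hker : corollaRel T D ≤ f.ker := by
    rw [corollaRel, AddSubgroup.closure_le]
    rintro g ⟨n, x, rfl⟩
    rcases eq_or_ne n 1 with rfl | hn
    · have hq : Quot.mk _ (h.e0 (D.map (T.leaf 1 0).op x)) =
          (Quot.mk _ (h.e0 (D.map (T.root 1).op x)) : SSetPi0 X) := by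
        apply Quot.sound
        exact ⟨h.e1 x, by rw [← h.leaf_comm], by rw [← h.root_comm]⟩
      show _ ∈ f.ker
      rw [AddMonoidHom.mem_ker, map_sub, map_sum, Fin.sum_univ_one]
      simp only [f, FreeAbelianGroup.map_of_apply, hq, sub_self]
      exact sub_eq_zero.mpr ((FreeAbelianGroup.map_of_apply _).trans
        ((congrArg FreeAbelianGroup.of hq).trans (FreeAbelianGroup.map_of_apply _).symm))
    · exact ((h.empty n hn).false x).elim
  let φinv : K0 T D →+ FreeAbelianGroup (SSetPi0 X) :=
    QuotientAddGroup.lift _ f hker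
  have left : ∀ z : FreeAbelianGroup (SSetPi0 X), φinv (ψ z) = z := by
    intro z
    have : φinv.comp ψ = AddMonoidHom.id _ := by
      apply FreeAbelianGroup.lift_ext
      intro q
      induction q using Quot.ind with
      | _ x =>
        simp only [AddMonoidHom.comp_apply, AddMonoidHom.id_apply, ψ, φinv,
          FreeAbelianGroup.lift_apply_of]
        show φinv (K0of T D (h.e0.symm x)) = _
        unfold K0of
        rw [QuotientAddGroup.lift_mk']
        simp [f, FreeAbelianGroup.map_of_apply]
        exact (FreeAbelianGroup.map_of_apply _).trans (by simp)
    exact congrFun (congrArg DFunLike.coe this) z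
  have right : ∀ z : K0 T D, ψ (φinv z) = z := by
    intro z
    obtain ⟨g, rfl⟩ := QuotientAddGroup.mk'_surjective (corollaRel T D) z
    have key : (ψ.comp φinv).comp (QuotientAddGroup.mk' (corollaRel T D)) =
        (AddMonoidHom.id _).comp (QuotientAddGroup.mk' (corollaRel T D)) := by
        apply FreeAbelianGroup.lift_ext
        intro d
        simp only [AddMonoidHom.comp_apply, AddMonoidHom.id_apply, QuotientAddGroup.mk'_apply,
          φinv, QuotientAddGroup.lift_mk', f, FreeAbelianGroup.map_of_apply, ψ,
          FreeAbelianGroup.lift_apply_of]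
        show K0of T D (h.e0.symm (h.e0 d)) = _
        rw [Equiv.symm_apply_apply]
        rfl
    exact congrFun (congrArg DFunLike.coe key) g
  refine ⟨AddEquiv.mk' ⟨⇑ψ, ⇑φinv, left, right⟩ ψ.map_add, fun x => ?_⟩
  show ψ (FreeAbelianGroup.of (Quot.mk _ x)) = K0of T D (h.e0.symm x)
  exact FreeAbelianGroup.lift_apply_of _ _
end

section
/- For a small symmetric monoidal category C, π_0(NC) is an abelian monoid under the tensor product, and the canonical map λ : π_0(NC) → K_0(N_d C) exhibits K_0(N_d C) as the group completion of the abelian monoid π_0(NC); in particular K_0(N_d C) ≅ K_0(C). -/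
/-!
STATEMENT 1: For a small symmetric monoidal category `C`, `π₀(NC)` is an
abelian monoid under the tensor product, and the canonical map
`λ : π₀(NC) → K₀(N_d C)` exhibits `K₀(N_d C)` as the group completion of the
abelian monoid `π₀(NC)`; in particular `K₀(N_d C) ≅ K₀(C)` (the latter being
by definition the group completion of `π₀(NC)`).

Encoding of the context.  The category `Ω` of finite rooted trees is bundled
as `TreeCat` (a small category with the tree `η`, the `n`-corollas and their
edge inclusions), a dendroidal set is a presheaf on `Ω`, and `K₀(D)` is the
free abelian group on `D(η)` modulo the corolla relations `x₁ + … + xₙ = x`.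
`π₀(NC)` — the set of connected components of the nerve of `C` — is the
quotient of the objects of `C` by the relation `∃ (a ⟶ b)`; its abelian monoid
structure induced by `⊗` is *constructed* below (this is the first assertion
of the statement).  The dendroidal nerve `N_d C` is encoded by the structure
`IsDendroidalNerve`: a dendroidal set whose edges are the objects of `C` and
whose `n`-corolla dendrices are tuples `(c₁, …, cₙ, c, f : c₁ ⊗ … ⊗ cₙ ⟶ c)`,
with leaf faces `cᵢ` and root face `c`.  That `λ` exhibits `K₀(N_d C)` as the
group completion is expressed by the universal property: `λ` is an additive
monoid map sending `[c]` to the generator `K₀of c`, and every monoid map from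
`π₀(NC)` to an abelian group factors uniquely through it.
-/

open CategoryTheory CategoryTheory.Limits Opposite MonoidalCategory

variable (T : TreeCat)

section Pi0

variable (C : Type) [SmallCategory C] [MonoidalCategory C] [SymmetricCategory C]

/-- Two objects of `C` are related if there is a morphism between them; the
quotient by (the equivalence relation generated by) this relation is the set
`π₀(NC)` of connected components of the nerve of `C`. -/
def nerveRel (a b : C) : Prop := Nonempty (a ⟶ b)

/-- `π₀(NC)`: connected components of the nerve of `C`. -/
abbrev NervePi0 : Type := Quot (nerveRel C)

namespace NervePi0

/-- Addition on `π₀(NC)` induced by the tensor product. -/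
instance : Add (NervePi0 C) :=
  ⟨Quot.lift
    (fun a => Quot.lift (fun b => Quot.mk (nerveRel C) (a ⊗ b))
      (fun b b' ⟨g⟩ => Quot.sound ⟨a ◁ g⟩))
    (fun a a' ⟨g⟩ => by
      funext q
      induction q using Quot.ind with
      | _ b => exact Quot.sound ⟨g ▷ b⟩)⟩

instance : Zero (NervePi0 C) := ⟨Quot.mk (nerveRel C) (𝟙_ C)⟩

lemma mk_add_mk (a b : C) :
    (Quot.mk (nerveRel C) a + Quot.mk (nerveRel C) b : NervePi0 C) =
      Quot.mk (nerveRel C) (a ⊗ b) := rfl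

lemma zero_def : (0 : NervePi0 C) = Quot.mk (nerveRel C) (𝟙_ C) := rfl

lemma add_assoc' (x y z : NervePi0 C) : x + y + z = x + (y + z) := by
  induction x using Quot.ind with | _ a =>
  induction y using Quot.ind with | _ b =>
  induction z using Quot.ind with | _ c =>
  rw [mk_add_mk, mk_add_mk, mk_add_mk, mk_add_mk]
  exact Quot.sound ⟨(α_ a b c).hom⟩

lemma zero_add' (x : NervePi0 C) : 0 + x = x := by
  induction x using Quot.ind with | _ a =>
  rw [zero_def, mk_add_mk]
  exact Quot.sound ⟨(λ_ a).hom⟩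

lemma add_zero' (x : NervePi0 C) : x + 0 = x := by
  induction x using Quot.ind with | _ a =>
  rw [zero_def, mk_add_mk]
  exact Quot.sound ⟨(ρ_ a).hom⟩

lemma add_comm' (x y : NervePi0 C) : x + y = y + x := by
  induction x using Quot.ind with | _ a =>
  induction y using Quot.ind with | _ b =>
  rw [mk_add_mk, mk_add_mk]
  exact Quot.sound ⟨(β_ a b).hom⟩

/-- FIRST ASSERTION of the statement: `π₀(NC)` is an abelian monoid under the
tensor product. -/
noncomputable instance : AddCommMonoid (NervePi0 C) where
  add := (· + ·)
  zero := 0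
  add_assoc := add_assoc' C
  zero_add := zero_add' C
  add_zero := add_zero' C
  add_comm := add_comm' C
  nsmul := nsmulRec

end NervePi0

/-- The tensor product `c₁ ⊗ … ⊗ cₙ` of a finite family of objects. -/
def tensorFin {n : ℕ} (c : Fin n → C) : C :=
  (List.ofFn c).foldr (MonoidalCategory.tensorObj) (𝟙_ C)

end Pi0

/-- `D` "is" the dendroidal nerve `N_d C` of the symmetric monoidal category
`C`:  its edges are the objects of `C` and its `n`-corolla dendrices are
tuples `(c₁, …, cₙ; c)` together with a morphism `c₁ ⊗ … ⊗ cₙ ⟶ c` in `C`,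
with leaf faces the `cᵢ` and root face `c`. -/
structure IsDendroidalNerve (C : Type) [SmallCategory C] [MonoidalCategory C]
    (D : dSet T) where
  e0 : dEdges T D ≃ C
  ecor : ∀ n : ℕ, D.obj (op (T.corolla n)) ≃
    Σ (c : Fin n → C) (c' : C), (tensorFin C c ⟶ c')
  leaf_comm : ∀ (n : ℕ) (i : Fin n) (d : D.obj (op (T.corolla n))),
    e0 (D.map (T.leaf n i).op d) = (ecor n d).1 i
  root_comm : ∀ (n : ℕ) (d : D.obj (op (T.corolla n))),
    e0 (D.map (T.root n).op d) = (ecor n d).2.1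

section Aux

variable {T} {C : Type} [SmallCategory C] [MonoidalCategory C] [SymmetricCategory C]

lemma tensorFin_succ {n : ℕ} (c : Fin (n + 1) → C) :
    tensorFin C c = c 0 ⊗ tensorFin C (fun i => c i.succ) := by
  simp [tensorFin, List.ofFn_succ]

lemma sum_mk_eq_mk_tensorFin : ∀ (n : ℕ) (c : Fin n → C),
    (∑ i : Fin n, Quot.mk (nerveRel C) (c i) : NervePi0 C) =
      Quot.mk (nerveRel C) (tensorFin C c) := by
  intro n
  induction n with
  | zero =>
    intro c
    simp [tensorFin, NervePi0.zero_def]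
  | succ n ih =>
    intro c
    rw [Fin.sum_univ_succ, ih (fun i => c i.succ), NervePi0.mk_add_mk,
      tensorFin_succ]

variable {D : dSet T} (h : IsDendroidalNerve T C D)

lemma rel_of_hom (n : ℕ) (c : Fin n → C) (c' : C) (g : tensorFin C c ⟶ c') :
    (∑ i : Fin n, FreeAbelianGroup.of (h.e0.symm (c i))) -
      FreeAbelianGroup.of (h.e0.symm c') ∈ corollaRel T D := by
  apply AddSubgroup.subset_closure
  refine ⟨n, (h.ecor n).symm ⟨c, c', g⟩, ?_⟩
  have hl : ∀ i : Fin n,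
      D.map (T.leaf n i).op ((h.ecor n).symm ⟨c, c', g⟩) = h.e0.symm (c i) := by
    intro i
    apply h.e0.injective
    rw [h.leaf_comm, Equiv.apply_symm_apply, Equiv.apply_symm_apply]
  have hr : D.map (T.root n).op ((h.ecor n).symm ⟨c, c', g⟩) = h.e0.symm c' := by
    apply h.e0.injective
    rw [h.root_comm, Equiv.apply_symm_apply, Equiv.apply_symm_apply]
  simp [hl, hr]

lemma K0of_eq_of_sub_mem {x y : dEdges T D}
    (hm : FreeAbelianGroup.of x - FreeAbelianGroup.of y ∈ corollaRel T D) :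
    K0of T D x = K0of T D y := by
  refine (QuotientAddGroup.eq).mpr ?_
  rw [neg_add_eq_sub]
  simpa [neg_sub] using (corollaRel T D).neg_mem hm

lemma K0of_hom {a b : C} (g : a ⟶ b) :
    K0of T D (h.e0.symm a) = K0of T D (h.e0.symm b) := by
  apply K0of_eq_of_sub_mem
  have := rel_of_hom h 1 (fun _ => a) b ((ρ_ a).hom ≫ g)
  simpa [tensorFin] using this

lemma K0of_unit : K0of T D (h.e0.symm (𝟙_ C)) = 0 := by
  have := rel_of_hom h 0 (fun i => i.elim0) (𝟙_ C) (𝟙 _)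
  have h0 : ((0 : FreeAbelianGroup (dEdges T D)) -
      FreeAbelianGroup.of (h.e0.symm (𝟙_ C))) ∈ corollaRel T D := by
    simpa using this
  have := (corollaRel T D).neg_mem h0
  rw [neg_sub, sub_zero] at this
  exact (QuotientAddGroup.eq).mpr (by simpa using (corollaRel T D).neg_mem this)

lemma K0of_tensor (a b : C) :
    K0of T D (h.e0.symm (a ⊗ b)) =
      K0of T D (h.e0.symm a) + K0of T D (h.e0.symm b) := by
  have := rel_of_hom h 2 (![a, b]) (a ⊗ b)
    (by rw [tensorFin_succ]; exact (MonoidalCategory.whiskerLeft a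
      (by simpa [tensorFin] using (ρ_ b).hom)))
  have h2 : (FreeAbelianGroup.of (h.e0.symm a) + FreeAbelianGroup.of (h.e0.symm b)) -
      FreeAbelianGroup.of (h.e0.symm (a ⊗ b)) ∈ corollaRel T D := by
    simpa [Fin.sum_univ_succ] using this
  have := (QuotientAddGroup.eq (s := corollaRel T D)
    (a := FreeAbelianGroup.of (h.e0.symm (a ⊗ b)))
    (b := FreeAbelianGroup.of (h.e0.symm a) + FreeAbelianGroup.of (h.e0.symm b))).mpr
    (by simpa [neg_add_eq_sub] using h2)
  simpa [K0of, QuotientAddGroup.mk_add] using this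

end Aux

/-- the canonical map `λ : π₀(NC) → K₀(N_d C)` is an additive
monoid homomorphism exhibiting `K₀(N_d C)` as the group completion of the
abelian monoid `π₀(NC)`; in particular `K₀(N_d C) ≅ K₀(C)`. -/
theorem K0_dendroidalNerve_is_group_completion_of_pi0
    (C : Type) [SmallCategory C] [MonoidalCategory C] [SymmetricCategory C]
    (D : dSet T) (h : IsDendroidalNerve T C D) :
    ∃ lam : NervePi0 C →+ K0 T D,
      (∀ c : C, lam (Quot.mk (nerveRel C) c) = K0of T D (h.e0.symm c)) ∧
      ∀ (G : Type) [AddCommGroup G] (f : NervePi0 C →+ G),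
        ∃! g : K0 T D →+ G, g.comp lam = f := by
  classical
  refine ⟨{ toFun := Quot.lift (fun c => K0of T D (h.e0.symm c))
              (fun a b ⟨g⟩ => K0of_hom h g)
            map_zero' := K0of_unit h
            map_add' := ?_ }, fun c => rfl, ?_⟩
  · intro x y
    induction x using Quot.ind with | _ a =>
    induction y using Quot.ind with | _ b =>
    rw [NervePi0.mk_add_mk]
    exact K0of_tensor h a b
  · intro G _ f
    set gbar : FreeAbelianGroup (dEdges T D) →+ G :=
      FreeAbelianGroup.lift (fun x => f (Quot.mk (nerveRel C) (h.e0 x))) with hgbar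
    have hker : corollaRel T D ≤ gbar.ker := by
      rw [corollaRel, AddSubgroup.closure_le]
      rintro _ ⟨n, d, rfl⟩
      have hl : ∀ i : Fin n, h.e0 (D.map (T.leaf n i).op d) = (h.ecor n d).1 i :=
        fun i => h.leaf_comm n i d
      have hr : h.e0 (D.map (T.root n).op d) = (h.ecor n d).2.1 := h.root_comm n d
      have : gbar ((∑ i : Fin n, FreeAbelianGroup.of (D.map (T.leaf n i).op d)) -
          FreeAbelianGroup.of (D.map (T.root n).op d)) =
          (∑ i : Fin n, f (Quot.mk (nerveRel C) ((h.ecor n d).1 i))) -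
          f (Quot.mk (nerveRel C) ((h.ecor n d).2.1)) := by
        simp [hgbar, map_sub, map_sum, hl, hr]
      refine AddMonoidHom.mem_ker.mpr (this.trans ?_)
      rw [← map_sum, sum_mk_eq_mk_tensorFin, sub_eq_zero]
      exact congrArg f (Quot.sound ⟨(h.ecor n d).2.2⟩)
    refine ⟨QuotientAddGroup.lift (corollaRel T D) gbar hker, ?_, ?_⟩
    · ext x
      induction x using Quot.ind with | _ c =>
      simp only [AddMonoidHom.comp_apply]
      show (QuotientAddGroup.lift (corollaRel T D) gbar hker)
        (K0of T D (h.e0.symm c)) = f (Quot.mk (nerveRel C) c)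
      rw [K0of, QuotientAddGroup.lift_mk]
      simp [hgbar]
    · intro g' hg'
      apply QuotientAddGroup.addMonoidHom_ext
      apply FreeAbelianGroup.lift_ext
      intro x
      have h1 : (QuotientAddGroup.mk' (corollaRel T D)) (FreeAbelianGroup.of x) =
          K0of T D x := rfl
      have h2 : K0of T D x = K0of T D (h.e0.symm (h.e0 x)) := by
        rw [Equiv.symm_apply_apply]
      have hg := congrFun (congrArg (·.toFun) hg') (Quot.mk (nerveRel C) (h.e0 x))
      simp only [AddMonoidHom.comp_apply] at *
      rw [h1, h2]
      have : g' (K0of T D (h.e0.symm (h.e0 x))) = f (Quot.mk (nerveRel C) (h.e0 x)) :=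
        hg
      rw [this]
      rw [← h2, K0of, QuotientAddGroup.lift_mk]
      exact (FreeAbelianGroup.lift_apply_of _ _).symm
end
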